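/- Suppose u₁, u₂ are two stabilizing feedback controllers with cost-to-go functions J₁, J₂, where J₁ is continuously differentiable, and suppose for every x the Hamiltonian inequality ∇J₁(x)·(f(x) + G(x)u₂(x)) + L(x, u₂(x)) ≤ ∇J₁(x)·(f(x) + G(x)u₁(x)) + L(x, u₁(x)) = 0 holds. Then J₂(x) ≤ J₁(x) for all x, assuming trajectories under u₂ drive J₁(x(t)) → 0 as t → ∞. -/

import Mathlib

open Set MeasureTheory Filter
open scoped RealInnerProductSpace

/-- Policy improvement: if the Hamiltonian of `u₂` with respect to `∇J₁` is no larger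
than that of `u₁` (which is zero by the GHJB equation for `u₁`), then the cost-to-go
of `u₂` is no larger than `J₁`. -/
theorem policy_improvement {n m : ℕ}
    (f : EuclideanSpace ℝ (Fin n) → EuclideanSpace ℝ (Fin n))
    (G : EuclideanSpace ℝ (Fin n) → (EuclideanSpace ℝ (Fin m) →L[ℝ] EuclideanSpace ℝ (Fin n)))
    (L : EuclideanSpace ℝ (Fin n) → EuclideanSpace ℝ (Fin m) → ℝ)
    (u₁ u₂ : EuclideanSpace ℝ (Fin n) → EuclideanSpace ℝ (Fin m))
    (J₁ : EuclideanSpace ℝ (Fin n) → ℝ) (g : EuclideanSpace ℝ (Fin n) → EuclideanSpace ℝ (Fin n))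
    (hL : ∀ y u, 0 ≤ L y u)
    (hJ₁ : ∀ y, HasGradientAt J₁ (g y) y)
    (hGHJB₁ : ∀ y, ⟪g y, f y + G y (u₁ y)⟫ + L y (u₁ y) = 0)
    (hineq : ∀ y, ⟪g y, f y + G y (u₂ y)⟫ + L y (u₂ y) ≤
      ⟪g y, f y + G y (u₁ y)⟫ + L y (u₁ y)) :
    ∀ (x₀ : EuclideanSpace ℝ (Fin n)) (x : ℝ → EuclideanSpace ℝ (Fin n)),
      x 0 = x₀ →
      (∀ t, HasDerivAt x (f (x t) + G (x t) (u₂ (x t))) t) →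
      IntegrableOn (fun t => L (x t) (u₂ (x t))) (Ioi 0) →
      Tendsto (fun t => J₁ (x t)) atTop (nhds 0) →
      ∫ t in Ioi (0 : ℝ), L (x t) (u₂ (x t)) ≤ J₁ x₀ := by
  intro x₀ x hx0 hx hint hlim
  -- derivative of t ↦ J₁ (x t)
  have hφ : ∀ t : ℝ, HasDerivAt (fun t => J₁ (x t))
      (⟪g (x t), f (x t) + G (x t) (u₂ (x t))⟫) t := by
    intro t
    have h1 := ((hJ₁ (x t)).hasFDerivAt).comp_hasDerivAt t (hx t)
    exact h1
  -- key bound on each finite interval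
  have key : ∀ T : ℝ, 0 ≤ T →
      (∫ t in (0:ℝ)..T, L (x t) (u₂ (x t))) ≤ (fun t => -J₁ (x t)) T - (fun t => -J₁ (x t)) 0 := by
    intro T hT
    refine intervalIntegral.integral_le_sub_of_hasDeriv_right_of_le
      (g := fun t => -J₁ (x t))
      (g' := fun t => -⟪g (x t), f (x t) + G (x t) (u₂ (x t))⟫)
      (φ := fun t => L (x t) (u₂ (x t))) hT ?_ ?_ ?_ ?_
    · exact fun t _ => ((hφ t).neg.continuousAt).continuousWithinAt
    · intro t _
      exact ((hφ t).neg.hasDerivWithinAt)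
    · rw [integrableOn_Icc_iff_integrableOn_Ioc]
      exact hint.mono_set Ioc_subset_Ioi_self
    · intro t _
      have h1 := hineq (x t)
      have h2 := hGHJB₁ (x t)
      have : ⟪g (x t), f (x t) + G (x t) (u₂ (x t))⟫ + L (x t) (u₂ (x t)) ≤ 0 := by
        rw [h2] at h1; exact h1
      show L (x t) (u₂ (x t)) ≤ -⟪g (x t), f (x t) + G (x t) (u₂ (x t))⟫
      linarith
  -- limit of interval integrals
  have hTend := MeasureTheory.intervalIntegral_tendsto_integral_Ioi 0 hint tendsto_id
  have hTend2 : Tendsto (fun T : ℝ => -J₁ (x T) + J₁ (x 0)) atTop (nhds (J₁ x₀)) := by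
    have := (hlim.neg).add_const (J₁ (x 0))
    simpa [hx0] using this
  refine le_of_tendsto_of_tendsto hTend hTend2 ?_
  filter_upwards [eventually_ge_atTop (0:ℝ)] with T hT
  have := key T hT
  simpa [sub_eq_add_neg, add_comm] using this
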